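/- Let the Gauss–Lobatto angles θ_i ∈ [0,π] be defined by ξ_{i,N} = cos θ_i, where ξ_{i,N} are the N+1 Gauss–Lobatto nodes. Then θ_i ∈ [2iπ/(2N+1), (2i+1)π/(2N+1)] for 0 ≤ i ≤ N (Sündermann's estimate). -/

import Mathlib

open Polynomial

/-- The Legendre polynomial `P_n`, via the Rodrigues formula. -/
noncomputable def legendreP (n : ℕ) : Polynomial ℝ :=
  Polynomial.C (1 / ((2 : ℝ) ^ n * n.factorial)) *
    (Polynomial.derivative^[n] ((Polynomial.X ^ 2 - 1) ^ n))

open Set Filter Topology Real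


lemma iter_deriv_sq_mul (m : ℕ) (h : Polynomial ℝ) :
    derivative^[m+2] ((X^2 - 1) * h) =
      (X^2-1) * derivative^[m+2] h + ((2*(m+2) : ℕ) : Polynomial ℝ) * X * derivative^[m+1] h
        + (((m+2)*(m+1) : ℕ) : Polynomial ℝ) * derivative^[m] h := by
  induction m generalizing h with
  | zero =>
    simp only [Function.iterate_succ_apply, Function.iterate_zero_apply,
      Function.iterate_one]
    simp [derivative_mul, derivative_pow, map_ofNat]
    push_cast
    ring
  | succ m ih =>
    rw [show m+1+2 = (m+2)+1 from rfl, Function.iterate_succ_apply', ih,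
      Function.iterate_succ_apply' derivative (m+2),
      Function.iterate_succ_apply' derivative (m+1),
      Function.iterate_succ_apply' derivative m]
    simp [derivative_mul, derivative_pow, map_ofNat]
    push_cast
    ring

lemma iter_deriv_X_mul (m : ℕ) (h : Polynomial ℝ) :
    derivative^[m+1] (X * h) =
      X * derivative^[m+1] h + ((m+1 : ℕ) : Polynomial ℝ) * derivative^[m] h := by
  induction m generalizing h with
  | zero => simp [derivative_mul]; ring
  | succ m ih =>
    rw [show m+1+1 = (m+1)+1 from rfl, Function.iterate_succ_apply', ih,
      Function.iterate_succ_apply' derivative (m+1),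
      Function.iterate_succ_apply' derivative m]
    simp [derivative_mul]
    push_cast
    ring

lemma legendre_ode_aux (n : ℕ) :
    let P := derivative^[n+1] ((X^2 - 1)^(n+1) : Polynomial ℝ)
    (X^2-1) * derivative (derivative P) + 2*X*derivative P
      = (((n+1)*(n+2) : ℕ) : Polynomial ℝ) * P := by
  intro P
  have key : (X^2 - 1) * derivative ((X^2-1)^(n+1) : Polynomial ℝ)
      = ((2*(n+1) : ℕ) : Polynomial ℝ) * (X * (X^2-1)^(n+1)) := by
    rw [derivative_pow]
    push_cast
    simp [map_ofNat]
    ring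
  have happ := congrArg (derivative^[n+2]) key
  rw [iter_deriv_sq_mul n _, iterate_derivative_natCast_mul,
    show n+2 = (n+1)+1 from rfl, iter_deriv_X_mul (n+1)] at happ
  have e1 : ∀ k : ℕ, derivative^[k] (derivative ((X^2-1)^(n+1) : Polynomial ℝ))
      = derivative^[k+1] ((X^2-1)^(n+1) : Polynomial ℝ) := by
    intro k; rw [← Function.iterate_succ_apply]
  rw [e1, e1, e1] at happ
  have e2 : derivative^[n+1+1+1] ((X^2-1)^(n+1) : Polynomial ℝ) = derivative (derivative P) := by
    simp only [P, Function.iterate_succ_apply']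
  have e3 : derivative^[n+1+1] ((X^2-1)^(n+1) : Polynomial ℝ) = derivative P := by
    simp only [P, Function.iterate_succ_apply']
  rw [show n+2+1 = n+1+1+1 from rfl, show n+2 = n+1+1 from rfl, e2, e3] at happ
  have hP : derivative^[n+1] ((X^2-1)^(n+1) : Polynomial ℝ) = P := rfl
  rw [hP] at happ
  have := happ
  push_cast at this ⊢
  linear_combination this

lemma legendre_ode (N : ℕ) (hN : 1 ≤ N) :
    (X^2-1) * derivative (derivative (legendreP N)) + 2*X*derivative (legendreP N)
      = ((N*(N+1) : ℕ) : Polynomial ℝ) * legendreP N := by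
  obtain ⟨n, rfl⟩ := Nat.exists_eq_add_of_le hN
  have h := legendre_ode_aux n
  simp only at h
  unfold legendreP
  rw [derivative_C_mul, derivative_C_mul]
  rw [show 1 + n = n + 1 by ring]
  linear_combination (C (1 / ((2 : ℝ) ^ (n+1) * (n+1).factorial)) : Polynomial ℝ) * h

lemma gegenbauer_ode (N : ℕ) (hN : 1 ≤ N) :
    let u := derivative (legendreP N)
    (X^2-1) * derivative (derivative u) + 4*X*derivative u + 2*u
      = ((N*(N+1) : ℕ) : Polynomial ℝ) * u := by
  intro u
  have h := congrArg derivative (legendre_ode N hN)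
  simp only [derivative_add, derivative_mul, derivative_natCast] at h
  simp only [derivative_X, derivative_one, derivative_pow, derivative_sub, derivative_ofNat, Nat.cast_ofNat, map_ofNat] at h
  simp only [u]
  linear_combination h

lemma gegenbauer_eval (N : ℕ) (hN : 1 ≤ N) (x : ℝ) :
    (x^2-1) * ((legendreP N).derivative.derivative.derivative.eval x)
      + 4*x*((legendreP N).derivative.derivative.eval x)
      + 2*((legendreP N).derivative.eval x)
      = (N*(N+1) : ℝ) * ((legendreP N).derivative.eval x) := by
  have h := congrArg (eval x) (gegenbauer_ode N hN)
  simp only [eval_add, eval_mul, eval_natCast, eval_pow, eval_X, eval_sub, eval_one,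
    eval_ofNat] at h
  push_cast at h
  linear_combination h

lemma w_monic (N : ℕ) : ((X^2 - 1 : Polynomial ℝ)^N).Monic := by
  apply Monic.pow
  have : (X^2 - 1 : Polynomial ℝ) = X^2 - C 1 := by simp
  rw [this]
  exact monic_X_pow_sub_C 1 two_ne_zero

lemma w_natDegree (N : ℕ) : ((X^2 - 1 : Polynomial ℝ)^N).natDegree = 2*N := by
  have h : (X^2 - 1 : Polynomial ℝ).natDegree = 2 := by
    have : (X^2 - 1 : Polynomial ℝ) = X^2 - C 1 := by simp
    rw [this, natDegree_X_pow_sub_C]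
  rw [Monic.natDegree_pow (by
    have e : (X^2 - 1 : Polynomial ℝ) = X^2 - C 1 := by simp
    rw [e]; exact monic_X_pow_sub_C 1 two_ne_zero), h, Nat.mul_comm]

lemma uP_eq (N : ℕ) : (legendreP N).derivative
    = C (1 / ((2 : ℝ) ^ N * N.factorial)) * derivative^[N+1] ((X ^ 2 - 1) ^ N) := by
  rw [legendreP, derivative_C_mul, Function.iterate_succ_apply']

lemma u_natDegree_le (N : ℕ) : ((legendreP N).derivative).natDegree ≤ N - 1 := by
  rw [uP_eq]
  refine (natDegree_C_mul_le _ _).trans ?_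
  refine (natDegree_iterate_derivative _ _).trans ?_
  rw [w_natDegree]
  omega

lemma u_coeff (N : ℕ) (hN : 1 ≤ N) : ((legendreP N).derivative).coeff (N-1) ≠ 0 := by
  rw [uP_eq, coeff_C_mul, coeff_iterate_derivative]
  have h1 : N - 1 + (N + 1) = 2*N := by omega
  rw [h1]
  have h2 : ((X^2 - 1 : Polynomial ℝ)^N).coeff (2*N) = 1 := by
    have := (w_monic N).leadingCoeff
    rwa [leadingCoeff, w_natDegree] at this
  rw [h2]
  have h3 : 0 < (2*N).descFactorial (N+1) := by
    rcases Nat.eq_zero_or_pos ((2*N).descFactorial (N+1)) with h | h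
    · rw [Nat.descFactorial_eq_zero_iff_lt] at h; omega
    · exact h
  have h4 : (0:ℝ) < ((2*N).descFactorial (N+1) : ℝ) := by exact_mod_cast h3
  simp only [nsmul_eq_mul, mul_one]
  positivity


lemma deriv_nonneg_left {f : ℝ → ℝ} {d a b : ℝ} (hab : a < b)
    (hd : HasDerivAt f d a) (ha : f a = 0) (hpos : ∀ x ∈ Ioo a b, 0 ≤ f x) :
    0 ≤ d := by
  have hs := hasDerivAt_iff_tendsto_slope.mp hd
  have hs' : Tendsto (slope f a) (𝓝[>] a) (𝓝 d) :=
    hs.mono_left (nhdsWithin_mono _ (fun x hx => ne_of_gt hx))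
  refine ge_of_tendsto hs' ?_
  filter_upwards [Ioo_mem_nhdsGT_of_mem (Set.mem_Ico.mpr ⟨le_refl a, hab⟩)] with x hx
  rw [slope_def_field, ha, sub_zero]
  exact div_nonneg (hpos x hx) (by linarith [hx.1])

lemma deriv_nonpos_right {f : ℝ → ℝ} {d a b : ℝ} (hab : a < b)
    (hd : HasDerivAt f d b) (hb : f b = 0) (hpos : ∀ x ∈ Ioo a b, 0 ≤ f x) :
    d ≤ 0 := by
  have hs := hasDerivAt_iff_tendsto_slope.mp hd
  have hs' : Tendsto (slope f b) (𝓝[<] b) (𝓝 d) :=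
    hs.mono_left (nhdsWithin_mono _ (fun x hx => ne_of_lt hx))
  refine le_of_tendsto hs' ?_
  filter_upwards [Ioo_mem_nhdsLT_of_mem (Set.mem_Ioc.mpr ⟨hab, le_refl b⟩)] with x hx
  rw [slope_def_field, hb, sub_zero]
  exact div_nonpos_of_nonneg_of_nonpos (hpos x hx) (by linarith [hx.2])

lemma limit_nonneg_endpoint {f : ℝ → ℝ} {a b c : ℝ} (hab : a < b)
    (hc : c = a ∨ c = b)
    (hcont : ContinuousWithinAt f (Icc a b) c) (hpos : ∀ x ∈ Ioo a b, 0 ≤ f x) :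
    0 ≤ f c := by
  have hmem : c ∈ closure (Ioo a b) := by
    rw [closure_Ioo hab.ne]
    rcases hc with rfl | rfl
    · exact ⟨le_refl _, hab.le⟩
    · exact ⟨hab.le, le_refl _⟩
  have hne : (𝓝[Ioo a b] c).NeBot := mem_closure_iff_nhdsWithin_neBot.mp hmem
  have ht : Tendsto f (𝓝[Ioo a b] c) (𝓝 (f c)) :=
    hcont.tendsto.mono_left (nhdsWithin_mono _ Ioo_subset_Icc_self)
  refine ge_of_tendsto ht ?_
  filter_upwards [self_mem_nhdsWithin] with x hx using hpos x hx

lemma sign_definite {f : ℝ → ℝ} {a b : ℝ} (hab : a < b)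
    (hc : ContinuousOn f (Ioo a b)) (hne : ∀ x ∈ Ioo a b, f x ≠ 0) :
    (∃ e : ℝ, (e = 1 ∨ e = -1) ∧ ∀ x ∈ Ioo a b, 0 < e * f x) := by
  set m := (a+b)/2 with hm
  have hmmem : m ∈ Ioo a b := ⟨by linarith, by linarith⟩
  rcases lt_or_gt_of_ne (hne m hmmem) with hneg | hpos
  · refine ⟨-1, Or.inr rfl, fun x hx => ?_⟩
    rcases lt_or_gt_of_ne (hne x hx) with h | h
    · nlinarith
    · exfalso
      have hsub : uIcc x m ⊆ Ioo a b := Set.ordConnected_Ioo.uIcc_subset hx hmmem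
      have h0 : (0:ℝ) ∈ uIcc (f x) (f m) := by
        rw [Set.mem_uIcc]; right; constructor <;> linarith
      obtain ⟨y, hy, hfy⟩ := intermediate_value_uIcc (hc.mono hsub) h0
      exact hne y (hsub hy) hfy
  · refine ⟨1, Or.inl rfl, fun x hx => ?_⟩
    rcases lt_or_gt_of_ne (hne x hx) with h | h
    · exfalso
      have hsub : uIcc x m ⊆ Ioo a b := Set.ordConnected_Ioo.uIcc_subset hx hmmem
      have h0 : (0:ℝ) ∈ uIcc (f x) (f m) := by
        rw [Set.mem_uIcc]; left; constructor <;> linarith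
      obtain ⟨y, hy, hfy⟩ := intermediate_value_uIcc (hc.mono hsub) h0
      exact hne y (hsub hy) hfy
    · nlinarith

lemma sturm_zero (F F₁ v v₁ Q : ℝ → ℝ) (lam a b : ℝ) (hab : a < b)
    (hF : ∀ x ∈ Icc a b, HasDerivAt F (F₁ x) x)
    (hF₁ : ∀ x ∈ Ioo a b, HasDerivAt F₁ (-(Q x) * F x) x)
    (hF₁c : ContinuousOn F₁ (Icc a b))
    (hv : ∀ x, HasDerivAt v (v₁ x) x)
    (hv₁ : ∀ x, HasDerivAt v₁ (-(lam^2) * v x) x)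
    (hQ : ∀ x ∈ Ioo a b, Q x < lam^2)
    (hFa : F a = 0) (hFb : F b = 0)
    (hFne : ∀ x ∈ Ioo a b, F x ≠ 0) :
    ∃ x ∈ Ioo a b, v x = 0 := by
  by_contra hcon
  push_neg at hcon
  have hFc : ContinuousOn F (Icc a b) := fun x hx => (hF x hx).continuousAt.continuousWithinAt
  have hvc : Continuous v := by
    have : Differentiable ℝ v := fun x => (hv x).differentiableAt
    exact this.continuous
  have hv₁c : Continuous v₁ := by
    have : Differentiable ℝ v₁ := fun x => (hv₁ x).differentiableAt
    exact this.continuous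
  obtain ⟨e₁, he₁u, he₁⟩ := sign_definite hab (hFc.mono Ioo_subset_Icc_self) hFne
  obtain ⟨e₂, he₂u, he₂⟩ := sign_definite hab (hvc.continuousOn) hcon
  set W : ℝ → ℝ := fun x => e₁ * e₂ * (F₁ x * v x - F x * v₁ x) with hW
  have hWc : ContinuousOn W (Icc a b) := by
    apply ContinuousOn.mul continuousOn_const
    exact ((hF₁c.mul hvc.continuousOn).sub (hFc.mul hv₁c.continuousOn))
  have hWd : ∀ x ∈ Ioo a b, HasDerivAt W (e₁*e₂*((lam^2 - Q x) * (F x * v x))) x := by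
    intro x hx
    have h1 : HasDerivAt (fun y => F₁ y * v y - F y * v₁ y)
        ((-(Q x) * F x) * v x + F₁ x * v₁ x - (F₁ x * v₁ x + F x * (-(lam^2) * v x))) x :=
      (((hF₁ x hx).mul (hv x))).sub ((hF x (Ioo_subset_Icc_self hx)).mul (hv₁ x))
    have h2 := h1.const_mul (e₁ * e₂)
    exact h2.congr_deriv (by ring)
  have hmono : StrictMonoOn W (Icc a b) := by
    apply strictMonoOn_of_deriv_pos (convex_Icc a b) hWc
    intro x hx
    rw [interior_Icc] at hx
    rw [(hWd x hx).deriv]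
    have h1 := hQ x hx
    have h2 := he₁ x hx
    have h3 := he₂ x hx
    have h4 := mul_pos (mul_pos (sub_pos.mpr h1) h2) h3
    nlinarith [h4]
  have hlt : W a < W b := hmono ⟨le_refl _, hab.le⟩ ⟨hab.le, le_refl _⟩ hab
  -- W a ≥ 0
  have hGa : 0 ≤ e₁ * F₁ a := by
    refine deriv_nonneg_left hab ((hF a ⟨le_refl _, hab.le⟩).const_mul e₁) (by simp [hFa]) ?_
    exact fun x hx => (he₁ x hx).le
  have hva : 0 ≤ e₂ * v a := by
    refine limit_nonneg_endpoint (f := fun x => e₂ * v x) hab (Or.inl rfl)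
      ((hvc.continuousWithinAt).const_mul e₂) (fun x hx => (he₂ x hx).le)
  have hGb : e₁ * F₁ b ≤ 0 := by
    refine deriv_nonpos_right hab ((hF b ⟨hab.le, le_refl _⟩).const_mul e₁) (by simp [hFb]) ?_
    exact fun x hx => (he₁ x hx).le
  have hvb : 0 ≤ e₂ * v b := by
    refine limit_nonneg_endpoint (f := fun x => e₂ * v x) hab (Or.inr rfl)
      ((hvc.continuousWithinAt).const_mul e₂) (fun x hx => (he₂ x hx).le)
  have hWa : W a = (e₁ * F₁ a) * (e₂ * v a) := by simp only [hW, hFa]; ring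
  have hWb : W b = (e₁ * F₁ b) * (e₂ * v b) := by simp only [hW, hFb]; ring
  rw [hWa, hWb] at hlt
  nlinarith [mul_nonneg hGa hva, mul_nonpos_of_nonpos_of_nonneg hGb hvb]

noncomputable def Ffun (N : ℕ) : ℝ → ℝ :=
  fun θ => (Real.sqrt (Real.sin θ))^3 * ((legendreP N).derivative.eval (Real.cos θ))

noncomputable def F1fun (N : ℕ) : ℝ → ℝ :=
  fun θ => (3/2) * Real.sqrt (Real.sin θ) * Real.cos θ
      * ((legendreP N).derivative.eval (Real.cos θ))
    - (Real.sqrt (Real.sin θ))^3 * Real.sin θ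
      * ((legendreP N).derivative.derivative.eval (Real.cos θ))

lemma hasDerivAt_g (p : Polynomial ℝ) (x : ℝ) :
    HasDerivAt (fun θ => p.eval (Real.cos θ))
      (-Real.sin x * p.derivative.eval (Real.cos x)) x := by
  have h := (p.hasDerivAt (Real.cos x)).comp x (Real.hasDerivAt_cos x)
  exact h.congr_deriv (by ring)

lemma hasDerivAt_A {x : ℝ} (hx : Real.sin x ≠ 0) :
    HasDerivAt (fun θ => Real.sqrt (Real.sin θ))
      (Real.cos x / (2 * Real.sqrt (Real.sin x))) x := by
  exact (Real.hasDerivAt_sqrt hx).comp x (Real.hasDerivAt_sin x) |>.congr_deriv (by ring)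

lemma F1_cont (N : ℕ) : Continuous (F1fun N) := by
  unfold F1fun
  fun_prop

lemma hasDerivAt_F_interior (N : ℕ) {x : ℝ} (hx : x ∈ Ioo 0 π) :
    HasDerivAt (Ffun N) (F1fun N x) x := by
  have hs : 0 < Real.sin x := Real.sin_pos_of_pos_of_lt_pi hx.1 hx.2
  have hA : 0 < Real.sqrt (Real.sin x) := Real.sqrt_pos.mpr hs
  have hA2 : Real.sqrt (Real.sin x) ^ 2 = Real.sin x := Real.sq_sqrt hs.le
  have h1 := hasDerivAt_A hs.ne'
  have h2 := h1.pow 3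
  have h3 := hasDerivAt_g (legendreP N).derivative x
  have h4 := h2.mul h3
  refine h4.congr_deriv ?_
  symm
  simp only [Pi.pow_apply, Pi.mul_apply]
  unfold F1fun
  field_simp
  ring

lemma hasDerivAt_sqrtsin_cube {x₀ : ℝ} (hb : ∀ θ : ℝ, |Real.sin θ| ≤ |θ - x₀|) :
    HasDerivAt (fun θ => (Real.sqrt (Real.sin θ))^3) 0 x₀ := by
  rw [hasDerivAt_iff_tendsto_slope]
  have hx0 : Real.sin x₀ = 0 := by
    have := hb x₀; simp at this; exact abs_eq_zero.mp (le_antisymm (by simpa using this) (abs_nonneg _))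
  have hzero : Real.sqrt (Real.sin x₀) ^ 3 = 0 := by rw [hx0, Real.sqrt_zero]; ring
  apply squeeze_zero_norm' (a := fun θ => Real.sqrt |θ - x₀|)
  · filter_upwards [self_mem_nhdsWithin] with θ (hθ : θ ≠ x₀)
    rw [slope_def_field, hzero, sub_zero]
    have hd : 0 < |θ - x₀| := abs_pos.mpr (sub_ne_zero.mpr hθ)
    have h1 : Real.sqrt (Real.sin θ) ^ 3 ≤ Real.sqrt |θ - x₀| ^ 3 := by
      apply pow_le_pow_left₀ (Real.sqrt_nonneg _)
      exact Real.sqrt_le_sqrt ((le_abs_self _).trans (hb θ))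
    have h2 : (0:ℝ) ≤ Real.sqrt (Real.sin θ) ^ 3 := by positivity
    have h3 : Real.sqrt |θ - x₀| ^ 2 = |θ - x₀| := Real.sq_sqrt (abs_nonneg _)
    rw [norm_div, Real.norm_eq_abs, Real.norm_eq_abs]
    rw [abs_of_nonneg h2]
    rw [div_le_iff₀ hd]
    calc Real.sqrt (Real.sin θ) ^ 3 ≤ Real.sqrt |θ - x₀| ^ 3 := h1
      _ = Real.sqrt |θ - x₀| * |θ - x₀| := by rw [pow_succ, h3, mul_comm]
  · have hc : Continuous (fun θ : ℝ => Real.sqrt |θ - x₀|) := by fun_prop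
    have := hc.tendsto x₀
    simp at this
    exact this.mono_left nhdsWithin_le_nhds

lemma hasDerivAt_F_endpoint (N : ℕ) {x : ℝ} (hx : x = 0 ∨ x = π) :
    HasDerivAt (Ffun N) (F1fun N x) x := by
  have hb : ∀ θ : ℝ, |Real.sin θ| ≤ |θ - x| := by
    intro θ
    rcases hx with rfl | rfl
    · simpa using Real.abs_sin_le_abs (x := θ)
    · have : Real.sin θ = -Real.sin (θ - π) := by
        rw [Real.sin_sub]; simp
      rw [this, abs_neg]
      exact Real.abs_sin_le_abs
  have h1 := hasDerivAt_sqrtsin_cube hb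
  have h3 := hasDerivAt_g (legendreP N).derivative x
  have h4 := h1.mul h3
  have hsx : Real.sin x = 0 := by rcases hx with rfl | rfl <;> simp
  refine h4.congr_deriv ?_
  symm
  unfold F1fun
  rw [hsx, Real.sqrt_zero]
  ring

noncomputable def Qfun (N : ℕ) : ℝ → ℝ :=
  fun θ => ((N:ℝ)+1/2)^2 - 3/(4 * Real.sin θ^2)

lemma hasDerivAt_F1 (N : ℕ) (hN : 1 ≤ N) {x : ℝ} (hx : x ∈ Ioo 0 π) :
    HasDerivAt (F1fun N) (-(Qfun N x) * Ffun N x) x := by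
  have hs : 0 < Real.sin x := Real.sin_pos_of_pos_of_lt_pi hx.1 hx.2
  have hA : 0 < Real.sqrt (Real.sin x) := Real.sqrt_pos.mpr hs
  have hA1 := hasDerivAt_A hs.ne'
  have hg0 := hasDerivAt_g (legendreP N).derivative x
  have hg1 := hasDerivAt_g (legendreP N).derivative.derivative x
  have hT1 := ((hA1.const_mul (3/2:ℝ)).mul (Real.hasDerivAt_cos x)).mul hg0
  have hT2 := ((hA1.pow 3).mul (Real.hasDerivAt_sin x)).mul hg1
  have hD := hT1.sub hT2
  refine hD.congr_deriv ?_
  symm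
  simp only [Pi.pow_apply, Pi.mul_apply, Pi.sub_apply]
  unfold Qfun Ffun
  set A := Real.sqrt (Real.sin x) with hAdef
  set c := Real.cos x with hcdef
  set u0 := (legendreP N).derivative.eval c with hu0
  set u1 := (legendreP N).derivative.derivative.eval c with hu1
  set u2 := (legendreP N).derivative.derivative.derivative.eval c with hu2d
  have hA2 : A ^ 2 = Real.sin x := Real.sq_sqrt hs.le
  have hpy : c^2 - 1 = -A^4 := by
    have h0 := Real.sin_sq_add_cos_sq x
    rw [← hcdef, ← hA2] at h0
    nlinarith [h0]
  have hG := gegenbauer_eval N hN c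
  rw [← hu0, ← hu1, ← hu2d] at hG
  have hu2 : A^4 * u2 = 4*c*u1 + 2*u0 - ((N:ℝ)*((N:ℝ)+1))*u0 := by
    linear_combination -hG + u2 * hpy
  rw [← hA2]
  have h31 : (3:ℕ) - 1 = 2 := rfl
  push_cast
  field_simp
  linear_combination (-16:ℝ)*A^4 * hu2 + (-12:ℝ)*u0 * hpy

lemma gap_zero (N : ℕ) (hN : 1 ≤ N) {a b : ℝ} (ha : 0 ≤ a) (hb : b ≤ π) (hab : a < b)
    (hFa : Ffun N a = 0) (hFb : Ffun N b = 0)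
    (hFne : ∀ x ∈ Ioo a b, Ffun N x ≠ 0)
    (v v₁ : ℝ → ℝ)
    (hv : ∀ x, HasDerivAt v (v₁ x) x)
    (hv₁ : ∀ x, HasDerivAt v₁ (-(((N:ℝ)+1/2)^2) * v x) x) :
    ∃ x ∈ Ioo a b, v x = 0 := by
  apply sturm_zero (Ffun N) (F1fun N) v v₁ (Qfun N) ((N:ℝ)+1/2) a b hab
  · intro x hx
    rcases eq_or_lt_of_le (ha.trans hx.1) with h0 | h0
    · exact hasDerivAt_F_endpoint N (Or.inl h0.symm)
    rcases eq_or_lt_of_le (hx.2.trans hb) with h1 | h1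
    · exact hasDerivAt_F_endpoint N (Or.inr h1)
    · exact hasDerivAt_F_interior N ⟨h0, h1⟩
  · intro x hx
    exact hasDerivAt_F1 N hN ⟨lt_of_le_of_lt ha hx.1, lt_of_lt_of_le hx.2 hb⟩
  · exact (F1_cont N).continuousOn
  · exact hv
  · exact hv₁
  · intro x hx
    have hx' : x ∈ Ioo 0 π := ⟨lt_of_le_of_lt ha hx.1, lt_of_lt_of_le hx.2 hb⟩
    have hs : 0 < Real.sin x := Real.sin_pos_of_pos_of_lt_pi hx'.1 hx'.2
    unfold Qfun
    have : 0 < 3/(4 * Real.sin x^2) := by positivity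
    linarith
  · exact hFa
  · exact hFb
  · exact hFne

lemma hv_sin (lam : ℝ) : ∀ x : ℝ, HasDerivAt (fun θ => Real.sin (lam*θ)) (lam * Real.cos (lam*x)) x := by
  intro x
  have h := (Real.hasDerivAt_sin (lam*x)).comp x ((hasDerivAt_id x).const_mul lam)
  exact h.congr_deriv (by ring)
lemma hv_sin' (lam : ℝ) : ∀ x : ℝ, HasDerivAt (fun θ => lam * Real.cos (lam*θ)) (-(lam^2) * Real.sin (lam*x)) x := by
  intro x
  have h := ((Real.hasDerivAt_cos (lam*x)).comp x ((hasDerivAt_id x).const_mul lam)).const_mul lam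
  exact h.congr_deriv (by ring)
lemma hv_cos (lam : ℝ) : ∀ x : ℝ, HasDerivAt (fun θ => Real.cos (lam*θ)) (-lam * Real.sin (lam*x)) x := by
  intro x
  have h := (Real.hasDerivAt_cos (lam*x)).comp x ((hasDerivAt_id x).const_mul lam)
  exact h.congr_deriv (by ring)
lemma hv_cos' (lam : ℝ) : ∀ x : ℝ, HasDerivAt (fun θ => -lam * Real.sin (lam*θ)) (-(lam^2) * Real.cos (lam*x)) x := by
  intro x
  have h := ((Real.hasDerivAt_sin (lam*x)).comp x ((hasDerivAt_id x).const_mul lam)).const_mul (-lam)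
  exact h.congr_deriv (by ring)

lemma gap_alpha (N : ℕ) (hN : 1 ≤ N) {a b : ℝ} (ha : 0 ≤ a) (hb : b ≤ π) (hab : a < b)
    (hFa : Ffun N a = 0) (hFb : Ffun N b = 0)
    (hFne : ∀ x ∈ Ioo a b, Ffun N x ≠ 0) :
    ∃ k : ℕ, 1 ≤ k ∧ k ≤ N ∧ (2*(k:ℝ)*π/(2*(N:ℝ)+1)) ∈ Ioo a b := by
  set lam : ℝ := (N:ℝ)+1/2 with hlam
  obtain ⟨x, hx, hvx⟩ := gap_zero N hN ha hb hab hFa hFb hFne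
    (fun θ => Real.sin (lam*θ)) (fun θ => lam * Real.cos (lam*θ)) (hv_sin lam) (hv_sin' lam)
  rw [Real.sin_eq_zero_iff] at hvx
  obtain ⟨n, hn⟩ := hvx
  have hlampos : 0 < lam := by positivity
  have hx0 : 0 < x := lt_of_le_of_lt ha hx.1
  have hxpi : x < π := lt_of_lt_of_le hx.2 hb
  have hn0 : 0 < (n:ℝ) := by
    have : 0 < (n:ℝ) * π := by rw [hn]; positivity
    nlinarith [Real.pi_pos]
  have hnN : n ≤ (N:ℤ) := by
    have h1 : (n:ℝ) * π < lam * π := by rw [hn]; nlinarith [Real.pi_pos, hlampos]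
    have h2 : (n:ℝ) < lam := by nlinarith [Real.pi_pos]
    have h3 : (n:ℝ) < (N:ℝ) + 1 := by rw [hlam] at h2; linarith
    have h4 : n < (N:ℤ) + 1 := by exact_mod_cast h3
    omega
  have hn1 : (1:ℤ) ≤ n := by exact_mod_cast hn0
  refine ⟨n.toNat, ?_, ?_, ?_⟩
  · omega
  · omega
  · have hxeq : x = 2*(n.toNat:ℝ)*π/(2*(N:ℝ)+1) := by
      have : (n.toNat : ℝ) = (n:ℝ) := by
        norm_cast; omega
      rw [this]
      have hden : (2*(N:ℝ)+1) ≠ 0 := by positivity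
      field_simp
      rw [hlam] at hn
      nlinarith [hn]
    rw [← hxeq]; exact hx

lemma gap_beta (N : ℕ) (hN : 1 ≤ N) {a b : ℝ} (ha : 0 ≤ a) (hb : b ≤ π) (hab : a < b)
    (hFa : Ffun N a = 0) (hFb : Ffun N b = 0)
    (hFne : ∀ x ∈ Ioo a b, Ffun N x ≠ 0) :
    ∃ k : ℕ, k + 1 ≤ N ∧ ((2*(k:ℝ)+1)*π/(2*(N:ℝ)+1)) ∈ Ioo a b := by
  set lam : ℝ := (N:ℝ)+1/2 with hlam
  obtain ⟨x, hx, hvx⟩ := gap_zero N hN ha hb hab hFa hFb hFne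
    (fun θ => Real.cos (lam*θ)) (fun θ => -lam * Real.sin (lam*θ)) (hv_cos lam) (hv_cos' lam)
  rw [Real.cos_eq_zero_iff] at hvx
  obtain ⟨n, hn⟩ := hvx
  have hlampos : 0 < lam := by positivity
  have hx0 : 0 < x := lt_of_le_of_lt ha hx.1
  have hxpi : x < π := lt_of_lt_of_le hx.2 hb
  have hpi := Real.pi_pos
  -- lam * x = (2n+1)*π/2
  have hn0 : (0:ℤ) ≤ n := by
    have h1 : 0 < (2*(n:ℝ)+1) * π / 2 := by rw [← hn]; positivity
    have h2 : (-1:ℝ) < 2*(n:ℝ)+1 := by nlinarith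
    have h2' : ((-1:ℤ):ℝ) < ((2*n+1 : ℤ):ℝ) := by push_cast; linarith
    have : (-1:ℤ) < 2*n+1 := by exact_mod_cast h2'
    omega
  have hnN : n + 1 ≤ (N:ℤ) := by
    have h1 : lam * x < lam * π := by nlinarith
    have h2 : (2*(n:ℝ)+1) * π / 2 < ((2*(N:ℝ)+1)/2) * π := by
      rw [← hn]; rw [hlam] at h1 ⊢; nlinarith
    have h3 : (2*(n:ℝ)+1) < 2*(N:ℝ)+1 := by nlinarith
    have h4' : ((2*n+1:ℤ):ℝ) < ((2*(N:ℤ)+1:ℤ):ℝ) := by push_cast; linarith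
    have h4 : 2*n+1 < 2*(N:ℤ)+1 := by exact_mod_cast h4'
    omega
  refine ⟨n.toNat, by omega, ?_⟩
  have hxeq : x = (2*(n.toNat:ℝ)+1)*π/(2*(N:ℝ)+1) := by
    have hcast : (n.toNat : ℝ) = (n:ℝ) := by norm_cast; omega
    rw [hcast]
    have hden : (2*(N:ℝ)+1) ≠ 0 := by positivity
    field_simp
    rw [hlam] at hn
    nlinarith [hn]
  rw [← hxeq]; exact hx

lemma mono_id {N : ℕ} (k : ℕ → ℕ) (hrange : ∀ j, 1 ≤ j → j ≤ N → 1 ≤ k j ∧ k j ≤ N)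
    (hmono : ∀ j j', 1 ≤ j → j < j' → j' ≤ N → k j < k j') :
    ∀ j, 1 ≤ j → j ≤ N → k j = j := by
  have hlow : ∀ j, 1 ≤ j → j ≤ N → j ≤ k j := by
    intro j
    induction j with
    | zero => omega
    | succ j ih =>
      intro h1 h2
      rcases Nat.eq_zero_or_pos j with rfl | hj
      · exact (hrange 1 le_rfl h2).1
      · have := ih hj (by omega)
        have := hmono j (j+1) hj (by omega) h2
        omega
  have hup : ∀ d, ∀ j, 1 ≤ j → j = N - d → k j ≤ j := by
    intro d
    induction d with
    | zero => intro j h1 h2; have := (hrange j h1 (by omega)).2; omega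
    | succ d ih =>
      intro j h1 h2
      rcases Nat.lt_or_ge (N - d) 1 with h | h
      · omega
      · have h3 := ih (N - d) h rfl
        have h4 : j < N - d := by omega
        have := hmono j (N - d) h1 h4 (by omega)
        omega
  intro j h1 h2
  have := hlow j h1 h2
  have := hup (N - j) j h1 (by omega)
  omega

/-- Sündermann's estimate: the Gauss–Lobatto angles `θ_i = arccos ξ_{N−i}`,
where the Gauss–Lobatto nodes `ξ_0 = −1 < ξ_1 < ... < ξ_N = 1` have interior
nodes the roots of `P_N'`, satisfy `θ_i ∈ [2iπ/(2N+1), (2i+1)π/(2N+1)]`. -/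
theorem sundermann_estimate (N : ℕ) (hN : 1 ≤ N) (ξ : ℕ → ℝ)
    (hfirst : ξ 0 = -1) (hlast : ξ N = 1)
    (hmono : ∀ i < N, ξ i < ξ (i + 1))
    (hroots : ∀ i, 0 < i → i < N → ((legendreP N).derivative).eval (ξ i) = 0) :
    ∀ i ≤ N,
      (2 * (i : ℝ) * Real.pi) / (2 * (N : ℝ) + 1) ≤ Real.arccos (ξ (N - i)) ∧
      Real.arccos (ξ (N - i)) ≤ ((2 * (i : ℝ) + 1) * Real.pi) / (2 * (N : ℝ) + 1) := by
  have hpi := Real.pi_pos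
  have hden : (0:ℝ) < 2*(N:ℝ)+1 := by positivity
  -- monotonicity of ξ
  have hle : ∀ q ≤ N, ∀ p ≤ q, ξ p ≤ ξ q := by
    intro q
    induction q with
    | zero =>
      intro _ p hp
      have : p = 0 := by omega
      rw [this]
    | succ q ih =>
      intro hq p hp
      rcases Nat.eq_or_lt_of_le hp with rfl | h
      · exact le_rfl
      · exact le_trans (ih (by omega) p (by omega)) (hmono q (by omega)).le
  have hstrict : ∀ p q, p < q → q ≤ N → ξ p < ξ q := by
    intro p q hpq hqN
    calc ξ p ≤ ξ (q-1) := hle (q-1) (by omega) p (by omega)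
      _ < ξ q := by have := hmono (q-1) (by omega); rwa [show q-1+1 = q by omega] at this
  have hbound : ∀ p ≤ N, ξ p ∈ Icc (-1:ℝ) 1 := by
    intro p hp
    constructor
    · rw [← hfirst]; exact hle p hp 0 (by omega)
    · rw [← hlast]; exact hle N le_rfl p hp
  set T : ℕ → ℝ := fun j => Real.arccos (ξ (N - j)) with hTdef
  have hT0 : T 0 = 0 := by simp [hTdef, hlast, Real.arccos_one]
  have hTN : T N = π := by simp [hTdef, hfirst, Real.arccos_neg_one]
  have hTmono : ∀ p q, p < q → q ≤ N → T p < T q := by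
    intro p q hpq hqN
    exact Real.strictAntiOn_arccos (hbound (N-q) (by omega)) (hbound (N-p) (by omega))
      (hstrict (N-q) (N-p) (by omega) (by omega))
  have hT0le : ∀ j, 0 ≤ T j := fun j => Real.arccos_nonneg _
  have hTpile : ∀ j, T j ≤ π := fun j => Real.arccos_le_pi _
  -- roots identification
  set u := (legendreP N).derivative with hudef
  have hune : u ≠ 0 := by
    intro h
    exact u_coeff N hN (by rw [hudef] at h; rw [h]; simp)
  classical
  have hrootid : ∀ y : ℝ, u.eval y = 0 → ∃ m, 1 ≤ m ∧ m ≤ N-1 ∧ y = ξ m := by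
    intro y hy
    set S := (Finset.Ioo 0 N).image ξ with hS
    have hSsub : S ⊆ u.roots.toFinset := by
      intro z hz
      rw [hS, Finset.mem_image] at hz
      obtain ⟨m, hm, rfl⟩ := hz
      rw [Finset.mem_Ioo] at hm
      rw [Multiset.mem_toFinset, Polynomial.mem_roots']
      exact ⟨hune, hroots m hm.1 hm.2⟩
    have hinj : Set.InjOn ξ ↑(Finset.Ioo 0 N) := by
      intro p hp q hq hpq
      rw [Finset.mem_coe, Finset.mem_Ioo] at hp hq
      by_contra hne
      rcases Nat.lt_or_ge p q with h | h
      · exact absurd hpq (ne_of_lt (hstrict p q h (by omega)))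
      · exact absurd hpq.symm (ne_of_lt (hstrict q p (by omega) (by omega)))
    have hScard : S.card = N - 1 := by
      rw [hS, Finset.card_image_of_injOn hinj, Nat.card_Ioo]
      omega
    have hcard2 : u.roots.toFinset.card ≤ N - 1 :=
      le_trans (Multiset.toFinset_card_le _)
        (le_trans (Polynomial.card_roots' u) (u_natDegree_le N))
    have hSeq : S = u.roots.toFinset :=
      Finset.eq_of_subset_of_card_le hSsub (by rw [hScard]; exact hcard2)
    have hyS : y ∈ S := by
      rw [hSeq, Multiset.mem_toFinset, Polynomial.mem_roots']
      exact ⟨hune, hy⟩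
    rw [hS, Finset.mem_image] at hyS
    obtain ⟨m, hm, hme⟩ := hyS
    rw [Finset.mem_Ioo] at hm
    exact ⟨m, by omega, by omega, hme.symm⟩
  -- F vanishes at the T j
  have hFT : ∀ j ≤ N, Ffun N (T j) = 0 := by
    intro j hj
    rcases Nat.eq_zero_or_pos j with rfl | hj1
    · rw [hT0]; unfold Ffun; simp
    rcases Nat.eq_or_lt_of_le hj with rfl | hjN
    · rw [hTN]; unfold Ffun; simp [Real.sin_pi]
    · have hm : N - j < N ∧ 0 < N - j := by omega
      have hcos : Real.cos (T j) = ξ (N - j) := by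
        rw [hTdef]
        exact Real.cos_arccos (hbound (N-j) (by omega)).1 (hbound (N-j) (by omega)).2
      unfold Ffun
      rw [hcos, ← hudef, hroots (N-j) hm.2 hm.1, mul_zero]
  -- F nonzero on gaps
  have hgapne : ∀ j, 1 ≤ j → j ≤ N → ∀ x ∈ Ioo (T (j-1)) (T j), Ffun N x ≠ 0 := by
    intro j h1 h2 x hx hFx
    have hx0 : 0 < x := lt_of_le_of_lt (hT0le (j-1)) hx.1
    have hxpi : x < π := lt_of_lt_of_le hx.2 (hTpile j)
    have hs : 0 < Real.sin x := Real.sin_pos_of_pos_of_lt_pi hx0 hxpi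
    have hux : u.eval (Real.cos x) = 0 := by
      unfold Ffun at hFx
      rcases mul_eq_zero.mp hFx with h | h
      · exact absurd h (by positivity)
      · rw [hudef]; exact h
    obtain ⟨m, hm1, hm2, hmeq⟩ := hrootid _ hux
    have hxT : x = T (N - m) := by
      show x = Real.arccos (ξ (N - (N - m)))
      have h3 : N - (N - m) = m := by omega
      rw [h3, ← hmeq, Real.arccos_cos hx0.le hxpi.le]
    have hc1 : T (j-1) < T (N-m) := hxT ▸ hx.1
    have hc2 : T (N-m) < T j := hxT ▸ hx.2
    have hlt1 : j - 1 < N - m := by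
      by_contra hcon
      push_neg at hcon
      rcases Nat.eq_or_lt_of_le hcon with h | h
      · rw [h] at hc1; exact lt_irrefl _ hc1
      · exact absurd (hTmono (N-m) (j-1) h (by omega)) (not_lt.mpr hc1.le)
    have hlt2 : N - m < j := by
      by_contra hcon
      push_neg at hcon
      rcases Nat.eq_or_lt_of_le hcon with h | h
      · rw [← h] at hc2; exact lt_irrefl _ hc2
      · exact absurd (hTmono j (N-m) h (by omega)) (not_lt.mpr hc2.le)
    omega
  -- alpha gap points
  have hgapA : ∀ j, ∃ kk : ℕ, 1 ≤ j → j ≤ N →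
      (1 ≤ kk ∧ kk ≤ N ∧ (2*(kk:ℝ)*π/(2*(N:ℝ)+1)) ∈ Ioo (T (j-1)) (T j)) := by
    intro j
    by_cases h : 1 ≤ j ∧ j ≤ N
    · obtain ⟨kk, h1, h2, h3⟩ := gap_alpha N hN (hT0le (j-1)) (hTpile j)
        (hTmono (j-1) j (by omega) h.2) (hFT (j-1) (by omega)) (hFT j h.2)
        (hgapne j h.1 h.2)
      exact ⟨kk, fun _ _ => ⟨h1, h2, h3⟩⟩
    · exact ⟨1, fun ha hb => absurd ⟨ha, hb⟩ h⟩
  choose kA hkA using hgapA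
  have hkAmono : ∀ j j', 1 ≤ j → j < j' → j' ≤ N → kA j < kA j' := by
    intro j j' h1 h2 h3
    have hj := hkA j h1 (by omega)
    have hj' := hkA j' (by omega) h3
    have hTj : T j ≤ T (j'-1) := by
      rcases Nat.eq_or_lt_of_le (show j ≤ j'-1 by omega) with h | h
      · rw [h]
      · exact (hTmono j (j'-1) h (by omega)).le
    have hlt : 2*(kA j:ℝ)*π/(2*(N:ℝ)+1) < 2*(kA j':ℝ)*π/(2*(N:ℝ)+1) :=
      lt_of_lt_of_le hj.2.2.2 (le_trans hTj hj'.2.2.1.le)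
    by_contra hcon
    push_neg at hcon
    have : (kA j' : ℝ) ≤ (kA j : ℝ) := by exact_mod_cast hcon
    have : 2*(kA j':ℝ)*π/(2*(N:ℝ)+1) ≤ 2*(kA j:ℝ)*π/(2*(N:ℝ)+1) := by
      gcongr
    linarith
  have hkAid : ∀ j, 1 ≤ j → j ≤ N → kA j = j :=
    mono_id kA (fun j h1 h2 => ⟨(hkA j h1 h2).1, (hkA j h1 h2).2.1⟩) hkAmono
  -- beta gap points
  have hgapB : ∀ j, ∃ kk : ℕ, 1 ≤ j → j ≤ N →
      (kk + 1 ≤ N ∧ ((2*(kk:ℝ)+1)*π/(2*(N:ℝ)+1)) ∈ Ioo (T (j-1)) (T j)) := by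
    intro j
    by_cases h : 1 ≤ j ∧ j ≤ N
    · obtain ⟨kk, h1, h2⟩ := gap_beta N hN (hT0le (j-1)) (hTpile j)
        (hTmono (j-1) j (by omega) h.2) (hFT (j-1) (by omega)) (hFT j h.2)
        (hgapne j h.1 h.2)
      exact ⟨kk, fun _ _ => ⟨h1, h2⟩⟩
    · exact ⟨0, fun ha hb => absurd ⟨ha, hb⟩ h⟩
  choose kB hkB using hgapB
  have hkBmono : ∀ j j', 1 ≤ j → j < j' → j' ≤ N → kB j + 1 < kB j' + 1 := by
    intro j j' h1 h2 h3
    have hj := hkB j h1 (by omega)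
    have hj' := hkB j' (by omega) h3
    have hTj : T j ≤ T (j'-1) := by
      rcases Nat.eq_or_lt_of_le (show j ≤ j'-1 by omega) with h | h
      · rw [h]
      · exact (hTmono j (j'-1) h (by omega)).le
    have hlt : (2*(kB j:ℝ)+1)*π/(2*(N:ℝ)+1) < (2*(kB j':ℝ)+1)*π/(2*(N:ℝ)+1) :=
      lt_of_lt_of_le hj.2.2 (le_trans hTj hj'.2.1.le)
    by_contra hcon
    push_neg at hcon
    have hc2 : (kB j' : ℝ) ≤ (kB j : ℝ) := by
      have : kB j' ≤ kB j := by omega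
      exact_mod_cast this
    have : (2*(kB j':ℝ)+1)*π/(2*(N:ℝ)+1) ≤ (2*(kB j:ℝ)+1)*π/(2*(N:ℝ)+1) := by
      gcongr
    linarith
  have hkBid : ∀ j, 1 ≤ j → j ≤ N → kB j + 1 = j := by
    have := mono_id (fun j => kB j + 1)
      (fun j h1 h2 => ⟨by show 1 ≤ kB j + 1; omega,
        by show kB j + 1 ≤ N; have := (hkB j h1 h2).1; omega⟩) hkBmono
    exact this
  -- main conclusion
  intro i hi
  rcases Nat.eq_zero_or_pos i with rfl | hi1
  · simp only [Nat.sub_zero, hlast, Real.arccos_one]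
    constructor
    · simp
    · positivity
  rcases Nat.eq_or_lt_of_le hi with rfl | hiN
  · rw [Nat.sub_self, hfirst, Real.arccos_neg_one]
    constructor
    · rw [div_le_iff₀ hden]; push_cast; nlinarith
    · rw [le_div_iff₀ hden]; push_cast; nlinarith
  · -- interior : 1 ≤ i ≤ N-1
    have hA := hkA i hi1 (by omega)
    have hAid := hkAid i hi1 (by omega)
    have hB := hkB (i+1) (by omega) (by omega)
    have hBid := hkBid (i+1) (by omega) (by omega)
    constructor
    · have hmem := hA.2.2
      rw [hAid] at hmem
      exact hmem.2.le
    · have hmem := hB.2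
      have hkb : kB (i+1) = i := by omega
      rw [hkb] at hmem
      have h5 : T (i+1-1) < (2*(i:ℝ)+1)*π/(2*(N:ℝ)+1) := hmem.1
      rw [show i+1-1 = i from rfl] at h5
      exact h5.le
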